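/- Let λ ∈ [0,1) be a constant cooperation strength, W a propagation matrix, and suppose every sub-objective E_i is nonnegative (E_i(x) ≥ 0 for all configurations x). Starting from the initial state Ψ^{(0)}_i ≡ 0 for every i, every iterate defines a valid lower bound function on the objective: for every k ≥ 0 and every configuration x, ∑_{i=1}^n Ψ^{(k)}_i(x_i) ≤ E(x), where Ψ^{(k)} = T_λ(Ψ^{(k−1)}). -/

import Mathlib

open Finset Filter Topology

/-- A propagation matrix: nonnegative entries with unit column sums. -/
def IsPropagationMatrix {n : ℕ} (W : Fin n → Fin n → ℝ) : Prop :=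
  (∀ i j, 0 ≤ W i j) ∧ ∀ j, ∑ i, W i j = 1

/-- The basic cooperative optimization update `T_λ`:
`T_λ(Ψ)_i(a) = min_{x : x_i = a} ((1−λ) E_i(x) + λ ∑_j w_{ij} Ψ_j(x_j))`. -/
noncomputable def coopT {n : ℕ} {D : Fin n → Type} [∀ i, Fintype (D i)]
    [∀ i, Nonempty (D i)]
    (E : Fin n → ((i : Fin n) → D i) → ℝ) (W : Fin n → Fin n → ℝ) (lam : ℝ)
    (Ψ : (i : Fin n) → D i → ℝ) : (i : Fin n) → D i → ℝ :=
  fun i a =>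
    Finset.univ.inf' Finset.univ_nonempty
      (fun x : (j : Fin n) → D j =>
        (1 - lam) * E i (Function.update x i a) +
          lam * ∑ j, W i j * Ψ j (Function.update x i a j))

/-- The total objective `E(x) = ∑ i, E_i(x)`. -/
def objective {n : ℕ} {D : Fin n → Type}
    (E : Fin n → ((i : Fin n) → D i) → ℝ) (x : (i : Fin n) → D i) : ℝ :=
  ∑ i, E i x

/-- `x̃` is a consensus solution with respect to the state `Ψ` and cooperation strength
`lam`: for every `i`, `x̃` globally minimizes the modified sub-objective
`x ↦ (1−λ) E_i(x) + λ ∑_j w_{ij} Ψ_j(x_j)`. -/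
def IsConsensusState {n : ℕ} {D : Fin n → Type}
    (E : Fin n → ((i : Fin n) → D i) → ℝ) (W : Fin n → Fin n → ℝ) (lam : ℝ)
    (Ψ : (i : Fin n) → D i → ℝ) (xt : (i : Fin n) → D i) : Prop :=
  ∀ i, ∀ x : (j : Fin n) → D j,
    (1 - lam) * E i xt + lam * ∑ j, W i j * Ψ j (xt j)
      ≤ (1 - lam) * E i x + lam * ∑ j, W i j * Ψ j (x j)

/-- With nonnegative sub-objectives and the zero initial state, every
iterate of `T_λ` defines a valid lower bound function on the objective. -/
theorem iterates_are_lower_bounds (n : ℕ) (hn : 1 ≤ n) (D : Fin n → Type)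
    [∀ i, Fintype (D i)] [∀ i, Nonempty (D i)]
    (E : Fin n → ((i : Fin n) → D i) → ℝ)
    (hE : ∀ i (x : (j : Fin n) → D j), 0 ≤ E i x)
    (W : Fin n → Fin n → ℝ) (hW : IsPropagationMatrix W)
    (lam : ℝ) (hlam0 : 0 ≤ lam) (hlam1 : lam < 1)
    (Psi : ℕ → (i : Fin n) → D i → ℝ)
    (hinit : ∀ i (a : D i), Psi 0 i a = 0)
    (hstep : ∀ k, Psi (k + 1) = coopT E W lam (Psi k)) :
    ∀ (k : ℕ) (x : (i : Fin n) → D i), ∑ i, Psi k i (x i) ≤ objective E x := by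
  intro k
  induction k with
  | zero =>
    intro x
    simp only [hinit]
    simp [objective]
    exact Finset.sum_nonneg fun i _ => hE i x
  | succ k ih =>
    intro x
    have hx : ∀ i : Fin n, Psi (k + 1) i (x i)
        ≤ (1 - lam) * E i x + lam * ∑ j, W i j * Psi k j (x j) := by
      intro i
      rw [hstep k]
      have := Finset.inf'_le
        (fun y : (j : Fin n) → D j =>
          (1 - lam) * E i (Function.update y i (x i)) +
            lam * ∑ j, W i j * Psi k j (Function.update y i (x i) j))
        (Finset.mem_univ x)
      exact le_of_le_of_eq this (by simp [Function.update_eq_self])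
    calc ∑ i, Psi (k + 1) i (x i)
        ≤ ∑ i, ((1 - lam) * E i x + lam * ∑ j, W i j * Psi k j (x j)) :=
          Finset.sum_le_sum fun i _ => hx i
      _ = (1 - lam) * objective E x + lam * ∑ j, Psi k j (x j) := by
          have h2 : ∑ i, ∑ j, W i j * Psi k j (x j) = ∑ j, Psi k j (x j) := by
            rw [Finset.sum_comm]
            exact Finset.sum_congr rfl fun j _ => by
              rw [← Finset.sum_mul, hW.2 j, one_mul]
          rw [Finset.sum_add_distrib, ← Finset.mul_sum, ← Finset.mul_sum, h2, objective]
      _ ≤ (1 - lam) * objective E x + lam * objective E x := by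
          gcongr
          exact ih x
      _ = objective E x := by ring
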